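/- Let U and V be finite types and μ a probability mass function on U × V. Let P be the marginal of μ on U, Q the marginal on V, and for each q ∈ V with Q(q) > 0 let P|Q=q denote the conditional distribution of the U-coordinate given that the V-coordinate equals q. Then ∑_{q : Q(q) > 0} Q(q) · ‖P − (P|Q=q)‖² ≤ (ln 2 / 2) · I(P;Q), where I(P;Q) = ∑_{u,v : μ(u,v) > 0} μ(u,v) · log₂( μ(u,v) / (P(u)·Q(v)) ) is the mutual information between the two coordinates. -/

import Mathlib

open scoped BigOperators

/-- Marginal of `μ` on the first coordinate. -/
noncomputable def margU {U V : Type*} [Fintype V] (μ : U × V → ℝ) (u : U) : ℝ :=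
  ∑ v, μ (u, v)

/-- Marginal of `μ` on the second coordinate. -/
noncomputable def margV {U V : Type*} [Fintype U] (μ : U × V → ℝ) (v : V) : ℝ :=
  ∑ u, μ (u, v)

/-- Conditional distribution of the first coordinate given that the second equals `v`. -/
noncomputable def condU {U V : Type*} [Fintype U] (μ : U × V → ℝ) (v : V) (u : U) : ℝ :=
  μ (u, v) / margV μ v

/-- Total variation distance between two mass functions on a finite type. -/
noncomputable def tvDist {U : Type*} [Fintype U] (p q : U → ℝ) : ℝ :=
  (1 / 2) * ∑ u, |p u - q u|

/-- Mutual information (base 2) between the two coordinates of `μ`. -/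
noncomputable def mutInfo {U V : Type*} [Fintype U] [Fintype V] (μ : U × V → ℝ) : ℝ :=
  ∑ p ∈ Finset.univ.filter (fun p => 0 < μ p),
    μ p * Real.logb 2 (μ p / (margU μ p.1 * margV μ p.2))

/-- Pinsker-type inequality: the expected squared total variation distance between the
marginal of the first coordinate and its conditional law given the second coordinate is at
most `(ln 2 / 2)` times the mutual information between the coordinates. -/

private lemma hasDerivF (x : ℝ) (hx : 0 < x) :
    HasDerivAt (fun y : ℝ => Real.log y - (y - 1) * (5 * y + 1) / (2 * y * (y + 2)))
      ((x - 1) ^ 3 / (x ^ 2 * (x + 2) ^ 2)) x := by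
  have hx2 : (0:ℝ) < x + 2 := by linarith
  have hden : (2 * x * (x + 2)) ≠ 0 := by positivity
  have hnum : HasDerivAt (fun y : ℝ => (y - 1) * (5 * y + 1))
      (1 * (5 * x + 1) + (x - 1) * (5 * 1)) x :=
    ((hasDerivAt_id' x).sub_const 1).mul (((hasDerivAt_id' x).const_mul 5).add_const 1)
  have hd : HasDerivAt (fun y : ℝ => 2 * y * (y + 2)) (2 * 1 * (x + 2) + 2 * x * 1) x :=
    ((hasDerivAt_id' x).const_mul 2).mul ((hasDerivAt_id' x).add_const 2)
  have hdiv := hnum.div hd hden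
  have hlog := Real.hasDerivAt_log hx.ne'
  refine (hlog.sub hdiv).congr_deriv ?_
  field_simp
  ring

private lemma key_log_ineq {x : ℝ} (hx : 0 < x) :
    (x - 1) * (5 * x + 1) / (2 * x * (x + 2)) ≤ Real.log x := by
  set F : ℝ → ℝ := fun y => Real.log y - (y - 1) * (5 * y + 1) / (2 * y * (y + 2)) with hFdef
  have hF1 : F 1 = 0 := by simp [hFdef]
  have key : 0 ≤ F x := by
    rcases le_or_gt 1 x with h1 | h1
    · have mono : MonotoneOn F (Set.Icc 1 x) := by
        apply monotoneOn_of_deriv_nonneg (convex_Icc 1 x)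
        · intro y hy
          exact (hasDerivF y (lt_of_lt_of_le one_pos hy.1)).continuousAt.continuousWithinAt
        · intro y hy
          rw [interior_Icc] at hy
          exact (hasDerivF y (lt_of_lt_of_le one_pos hy.1.le)).differentiableAt.differentiableWithinAt
        · intro y hy
          rw [interior_Icc] at hy
          have hy0 : 0 < y := lt_of_lt_of_le one_pos hy.1.le
          rw [(hasDerivF y hy0).deriv]
          have : (0:ℝ) ≤ (y - 1) ^ 3 := pow_nonneg (by linarith [hy.1]) 3
          positivity
      have := mono (Set.left_mem_Icc.2 h1) (Set.right_mem_Icc.2 h1) h1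
      rw [hF1] at this; exact this
    · have anti : AntitoneOn F (Set.Icc x 1) := by
        apply antitoneOn_of_deriv_nonpos (convex_Icc x 1)
        · intro y hy
          exact (hasDerivF y (lt_of_lt_of_le hx hy.1)).continuousAt.continuousWithinAt
        · intro y hy
          rw [interior_Icc] at hy
          exact (hasDerivF y (lt_trans hx hy.1)).differentiableAt.differentiableWithinAt
        · intro y hy
          rw [interior_Icc] at hy
          have hy0 : 0 < y := lt_trans hx hy.1
          rw [(hasDerivF y hy0).deriv]
          apply div_nonpos_of_nonpos_of_nonneg
          · exact Odd.pow_nonpos ⟨1, by norm_num⟩ (by linarith [hy.2])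
          · positivity
      have := anti (Set.left_mem_Icc.2 h1.le) (Set.right_mem_Icc.2 h1.le) h1.le
      rw [hF1] at this; exact this
  have : (x - 1) * (5 * x + 1) / (2 * x * (x + 2)) ≤ Real.log x := by
    have := key
    simp only [hFdef] at this
    linarith
  exact this

private lemma pointwise_kl {a b : ℝ} (ha : 0 ≤ a) (hb : 0 ≤ b) (hab : b = 0 → a = 0) :
    3 * (a - b) ^ 2 / (2 * (a + 2 * b)) ≤ a * Real.log (a / b) - a + b := by
  rcases hb.eq_or_lt with hb0 | hb0
  · have ha0 : a = 0 := hab hb0.symm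
    simp [ha0, ← hb0]
  rcases ha.eq_or_lt with ha0 | ha0
  · rw [← ha0]
    have h1 : 3 * (0 - b) ^ 2 / (2 * (0 + 2 * b)) = 3 / 4 * b := by
      field_simp; ring
    rw [h1]; simp; linarith
  · have hx : 0 < a / b := div_pos ha0 hb0
    have hkey := key_log_ineq hx
    have hval : (a / b - 1) * (5 * (a / b) + 1) / (2 * (a / b) * (a / b + 2)) =
        (a - b) * (5 * a + b) / (2 * a * (a + 2 * b)) := by
      have h1 : (a:ℝ) ≠ 0 := ha0.ne'
      have h2 : (b:ℝ) ≠ 0 := hb0.ne'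
      have h3 : a + 2 * b ≠ 0 := by positivity
      field_simp
    rw [hval] at hkey
    have hmul := mul_le_mul_of_nonneg_left hkey ha0.le
    have hval2 : a * ((a - b) * (5 * a + b) / (2 * a * (a + 2 * b))) =
        (a - b) * (5 * a + b) / (2 * (a + 2 * b)) := by
      field_simp
    rw [hval2] at hmul
    have hid : 3 * (a - b) ^ 2 / (2 * (a + 2 * b)) =
        (a - b) * (5 * a + b) / (2 * (a + 2 * b)) + b - a := by
      have h3 : a + 2 * b ≠ 0 := by positivity
      field_simp
      ring
    linarith

private lemma pinsker_fin {U : Type*} [Fintype U] (a b : U → ℝ)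
    (ha : ∀ u, 0 ≤ a u) (hb : ∀ u, 0 ≤ b u)
    (hsa : ∑ u, a u = 1) (hsb : ∑ u, b u = 1)
    (hab : ∀ u, b u = 0 → a u = 0) :
    ((1:ℝ) / 2 * ∑ u, |b u - a u|) ^ 2 ≤ 1 / 2 * ∑ u, a u * Real.log (a u / b u) := by
  set w : U → ℝ := fun u => (a u + 2 * b u) / 3 with hw
  have hw0 : ∀ u, 0 ≤ w u := fun u => by have := ha u; have := hb u; positivity
  have hsw : ∑ u, w u = 1 := by
    simp only [hw, ← Finset.sum_div, Finset.sum_add_distrib, ← Finset.mul_sum, hsa, hsb]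
    norm_num
  have hCS : (∑ u, |b u - a u|) ^ 2 ≤ (∑ u, w u) * ∑ u, (b u - a u) ^ 2 / w u := by
    apply Finset.sum_sq_le_sum_mul_sum_of_sq_eq_mul
    · exact fun u _ => hw0 u
    · exact fun u _ => div_nonneg (sq_nonneg _) (hw0 u)
    · intro u _
      rcases (hw0 u).eq_or_lt with h | h
      · have hb0 : b u = 0 := by
          have := ha u; have := hb u
          simp only [hw] at h; linarith [h.symm]
        have ha0 : a u = 0 := hab u hb0
        simp [← h, hb0, ha0]
      · rw [sq_abs, mul_div_cancel₀ _ h.ne']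
  have hpt : ∑ u, (b u - a u) ^ 2 / w u ≤
      2 * ∑ u, (a u * Real.log (a u / b u) - a u + b u) := by
    rw [Finset.mul_sum]
    apply Finset.sum_le_sum
    intro u _
    have h1 : (b u - a u) ^ 2 / w u = 2 * (3 * (a u - b u) ^ 2 / (2 * (a u + 2 * b u))) := by
      rcases eq_or_ne (a u + 2 * b u) 0 with h | h
      · have hb0 : b u = 0 := by have := ha u; have := hb u; linarith
        have ha0 : a u = 0 := hab u hb0
        simp [hw, ha0, hb0]
      · simp only [hw]
        rw [div_div_eq_mul_div]
        field_simp
        ring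
    rw [h1]
    have := pointwise_kl (ha u) (hb u) (hab u)
    linarith
  have hsum : ∑ u, (a u * Real.log (a u / b u) - a u + b u) =
      ∑ u, a u * Real.log (a u / b u) := by
    simp [Finset.sum_add_distrib, Finset.sum_sub_distrib, hsa, hsb]
  rw [hsum] at hpt
  rw [hsw, one_mul] at hCS
  have := hCS.trans hpt
  nlinarith [this]

theorem expected_sq_tv_le_mutInfo {U V : Type*} [Fintype U] [Fintype V]
    (μ : U × V → ℝ) (h0 : ∀ p, 0 ≤ μ p) (h1 : ∑ p, μ p = 1) :
    ∑ v ∈ Finset.univ.filter (fun v => 0 < margV μ v),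
        margV μ v * (tvDist (margU μ) (condU μ v)) ^ 2
      ≤ (Real.log 2 / 2) * mutInfo μ := by
  classical
  have hQ0 : ∀ v, 0 ≤ margV μ v := fun v => Finset.sum_nonneg fun u _ => h0 (u, v)
  have hP0 : ∀ u, 0 ≤ margU μ u := fun u => Finset.sum_nonneg fun v _ => h0 (u, v)
  have hμP : ∀ u v, μ (u, v) ≤ margU μ u := fun u v =>
    Finset.single_le_sum (fun v' _ => h0 (u, v')) (Finset.mem_univ v)
  have hμQ : ∀ u v, μ (u, v) ≤ margV μ v := fun u v =>
    Finset.single_le_sum (fun u' _ => h0 (u', v)) (Finset.mem_univ u)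
  have hsP : ∑ u, margU μ u = 1 := by
    rw [← h1, ← Finset.univ_product_univ, Finset.sum_product]
    simp [margU]
  set S := Finset.univ.filter (fun v => 0 < margV μ v) with hS
  set G : U × V → ℝ := fun p => μ p * Real.log (μ p / (margU μ p.1 * margV μ p.2)) with hG
  have step1 : ∑ v ∈ S, margV μ v * (tvDist (margU μ) (condU μ v)) ^ 2 ≤
      ∑ v ∈ S, margV μ v *
        (1 / 2 * ∑ u, condU μ v u * Real.log (condU μ v u / margU μ u)) := by
    apply Finset.sum_le_sum
    intro v hv
    have hQv : 0 < margV μ v := (Finset.mem_filter.1 hv).2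
    apply mul_le_mul_of_nonneg_left _ (hQ0 v)
    have hpin := pinsker_fin (condU μ v) (margU μ)
      (fun u => div_nonneg (h0 (u, v)) (hQ0 v)) hP0
      (by
        simp only [condU]
        rw [← Finset.sum_div]
        have hnum : (∑ u, μ (u, v)) = margV μ v := rfl
        rw [hnum, div_self hQv.ne'])
      hsP
      (fun u h => by
        have hz : μ (u, v) = 0 := le_antisymm (h ▸ hμP u v) (h0 (u, v))
        simp [condU, hz])
    simpa [tvDist] using hpin
  have step2 : ∀ v ∈ S, margV μ v *
      (1 / 2 * ∑ u, condU μ v u * Real.log (condU μ v u / margU μ u)) =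
      1 / 2 * ∑ u, G (u, v) := by
    intro v hv
    have hQv : 0 < margV μ v := (Finset.mem_filter.1 hv).2
    rw [mul_left_comm]
    congr 1
    rw [Finset.mul_sum]
    apply Finset.sum_congr rfl
    intro u _
    have e1 : margV μ v * condU μ v u = μ (u, v) := by
      simp only [condU]
      rw [mul_comm, div_mul_cancel₀ _ hQv.ne']
    have e2 : condU μ v u / margU μ u = μ (u, v) / (margU μ u * margV μ v) := by
      simp only [condU]
      rw [div_div, mul_comm]
    rw [← mul_assoc, e1, e2]
  have step3 : ∑ v ∈ S, (1 / 2 * ∑ u, G (u, v)) =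
      1 / 2 * ∑ p ∈ Finset.univ.filter (fun p => 0 < μ p), G p := by
    rw [← Finset.mul_sum]
    congr 1
    have hA : ∑ v ∈ S, (∑ u, G (u, v)) = ∑ v, ∑ u, G (u, v) := by
      apply Finset.sum_filter_of_ne
      intro v _ hne
      by_contra hp
      apply hne
      apply Finset.sum_eq_zero
      intro u _
      have hq0 : margV μ v = 0 := le_antisymm (not_lt.1 hp) (hQ0 v)
      have hz : μ (u, v) = 0 := le_antisymm (hq0 ▸ hμQ u v) (h0 (u, v))
      simp [hG, hz]
    have hB : ∑ v, ∑ u, G (u, v) = ∑ p : U × V, G p := by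
      rw [← Finset.univ_product_univ, Finset.sum_product_right]
    have hC : ∑ p : U × V, G p = ∑ p ∈ Finset.univ.filter (fun p => 0 < μ p), G p := by
      symm
      apply Finset.sum_filter_of_ne
      intro p _ hne
      by_contra hp
      apply hne
      have hz : μ p = 0 := le_antisymm (not_lt.1 hp) (h0 p)
      simp [hG, hz]
    rw [hA, hB, hC]
  have step4 : (1:ℝ) / 2 * ∑ p ∈ Finset.univ.filter (fun p => 0 < μ p), G p =
      Real.log 2 / 2 * mutInfo μ := by
    have hlog2 : (0:ℝ) < Real.log 2 := Real.log_pos (by norm_num)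
    rw [mutInfo, Finset.mul_sum, Finset.mul_sum]
    apply Finset.sum_congr rfl
    intro p _
    rw [Real.logb]
    simp [hG]
    field_simp
  calc ∑ v ∈ S, margV μ v * (tvDist (margU μ) (condU μ v)) ^ 2
      ≤ ∑ v ∈ S, margV μ v *
        (1 / 2 * ∑ u, condU μ v u * Real.log (condU μ v u / margU μ u)) := step1
    _ = ∑ v ∈ S, (1 / 2 * ∑ u, G (u, v)) := Finset.sum_congr rfl step2
    _ = 1 / 2 * ∑ p ∈ Finset.univ.filter (fun p => 0 < μ p), G p := step3
    _ = Real.log 2 / 2 * mutInfo μ := step4
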